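/- The filter F on ω^ω of all sets whose complement has order type less than ω^ω does not satisfy the following property (*): whenever f : ω^ω → ℕ is unbounded on every member of F, there is an F-positive set A such that f restricted to A is finite-to-one. -/

import Mathlib

/-- The order type of a set of ordinals. -/
noncomputable def otype {α : Type*} [LinearOrder α] [WellFoundedLT α] (S : Set α) : Ordinal :=
  Ordinal.type ((· < ·) : S → S → Prop)

open Ordinal in
/-- Convert a finite ordinal to a natural number. -/
noncomputable def ordNatOf (a : Ordinal) : ℕ := a.card.toNat

open Ordinal in
theorem ordNatOf_eq {a : Ordinal} (h : a < Ordinal.omega0) : ((ordNatOf a : ℕ) : Ordinal) = a := by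
  obtain ⟨n, rfl⟩ := Ordinal.lt_omega0.1 h
  simp [ordNatOf]

open Ordinal in
theorem lift_omega0_opow_natCast (n : ℕ) :
    Ordinal.lift.{v} (omega0 ^ (n : Ordinal)) = omega0 ^ (n : Ordinal) := by
  rw [Ordinal.opow_natCast, Ordinal.opow_natCast]
  induction n with
  | zero => simp
  | succ n ih => rw [pow_succ, pow_succ, Ordinal.lift_mul, ih, Ordinal.lift_omega0]

open Ordinal in
theorem lt_omega0_opow_omega0_iff {a : Ordinal} :
    a < omega0 ^ omega0 ↔ ∃ n : ℕ, a < omega0 ^ (n : Ordinal) := by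
  constructor
  · intro h
    obtain ⟨c, hc, n, hn⟩ := (Ordinal.lt_omega0_opow Ordinal.omega0_ne_zero).1 h
    obtain ⟨k, rfl⟩ := Ordinal.lt_omega0.1 hc
    refine ⟨k + 1, lt_of_lt_of_le hn (le_of_lt ?_)⟩
    have : ((k : Ordinal)) < ((k + 1 : ℕ) : Ordinal) := by exact_mod_cast Nat.lt_succ_self k
    exact Ordinal.omega0_opow_mul_nat_lt this n
  · rintro ⟨n, hn⟩
    exact hn.trans ((Ordinal.opow_lt_opow_iff_right Ordinal.one_lt_omega0).2
      (Ordinal.nat_lt_omega0 n))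

open Ordinal in
theorem lift_omega0_opow_omega0 :
    Ordinal.lift.{u + 1} ((omega0 ^ omega0 : Ordinal.{u})) = omega0 ^ omega0 := by
  apply le_antisymm
  · refine le_of_forall_lt fun c hc => ?_
    obtain ⟨c', hc', rfl⟩ := Ordinal.lt_lift_iff.1 hc
    obtain ⟨n, hn⟩ := lt_omega0_opow_omega0_iff.1 hc'
    calc Ordinal.lift.{u + 1} c' < Ordinal.lift.{u + 1} (omega0 ^ (n : Ordinal)) :=
          Ordinal.lift_lt.2 hn
      _ = omega0 ^ (n : Ordinal) := lift_omega0_opow_natCast n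
      _ < omega0 ^ omega0 :=
          (Ordinal.opow_lt_opow_iff_right Ordinal.one_lt_omega0).2 (Ordinal.nat_lt_omega0 n)
  · refine le_of_forall_lt fun c hc => ?_
    obtain ⟨n, hn⟩ := lt_omega0_opow_omega0_iff.1 hc
    calc c < omega0 ^ (n : Ordinal) := hn
      _ = Ordinal.lift.{u + 1} (omega0 ^ (n : Ordinal)) := (lift_omega0_opow_natCast n).symm
      _ ≤ Ordinal.lift.{u + 1} ((omega0 ^ omega0 : Ordinal.{u})) :=
          Ordinal.lift_le.2 (le_of_lt ((Ordinal.opow_lt_opow_iff_right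
            Ordinal.one_lt_omega0).2 (Ordinal.nat_lt_omega0 n)))

open Ordinal in
theorem type_Iio_ordinal (o : Ordinal.{u}) :
    Ordinal.type ((· < ·) : Set.Iio o → Set.Iio o → Prop) = Ordinal.lift.{u + 1} o :=
  Ordinal.type_lt_Iio o

/-- The filter `F` on `ω^ω` of all sets whose complement has order type `< ω^ω` does not
satisfy property (*): there is a function `f : ω^ω → ℕ` that is unbounded (has infinite
image) on every member of `F`, yet `f` is not finite-to-one on any `F`-positive set. -/
theorem tail_filter_not_star :
    ¬ (∀ f : Set.Iio (Ordinal.omega0 ^ Ordinal.omega0) → ℕ,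
        (∀ B : Set (Set.Iio (Ordinal.omega0 ^ Ordinal.omega0)),
          otype Bᶜ < Ordinal.omega0 ^ Ordinal.omega0 → (f '' B).Infinite) →
        ∃ A : Set (Set.Iio (Ordinal.omega0 ^ Ordinal.omega0)),
          (∀ B : Set (Set.Iio (Ordinal.omega0 ^ Ordinal.omega0)),
            otype Bᶜ < Ordinal.omega0 ^ Ordinal.omega0 → (A ∩ B).Nonempty) ∧
          ∀ k : ℕ, {o ∈ A | f o = k}.Finite) := by
  intro H
  -- the function: degree (log base ω)
  set f : Set.Iio (Ordinal.omega0 ^ Ordinal.omega0) → ℕ :=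
    fun x => ordNatOf (Ordinal.log Ordinal.omega0 x.1) with hf
  have hlog : ∀ x : Set.Iio (Ordinal.omega0 ^ Ordinal.omega0),
      Ordinal.log Ordinal.omega0 x.1 < Ordinal.omega0 := by
    intro x
    rcases eq_or_ne x.1 0 with h0 | h0
    · simp [h0, Ordinal.omega0_pos]
    · exact (Ordinal.lt_opow_iff_log_lt Ordinal.one_lt_omega0 h0).1 x.2
  have hfcast : ∀ x : Set.Iio (Ordinal.omega0 ^ Ordinal.omega0),
      ((f x : ℕ) : Ordinal) = Ordinal.log Ordinal.omega0 x.1 :=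
    fun x => ordNatOf_eq (hlog x)
  -- f is monotone
  have hfmono : ∀ x y : Set.Iio (Ordinal.omega0 ^ Ordinal.omega0), x.1 ≤ y.1 → f x ≤ f y := by
    intro x y hxy
    have := Ordinal.log_mono_right Ordinal.omega0 hxy
    rw [← hfcast x, ← hfcast y] at this
    exact_mod_cast this
  -- unboundedness of f on filter sets
  have hunb : ∀ B : Set (Set.Iio (Ordinal.omega0 ^ Ordinal.omega0)),
      otype Bᶜ < Ordinal.omega0 ^ Ordinal.omega0 → (f '' B).Infinite := by
    intro B hB
    by_contra hninf
    rw [Set.not_infinite] at hninf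
    obtain ⟨n, hn⟩ := hninf.bddAbove
    -- every element of B is below ω^(n+1)
    have hBbd : ∀ x ∈ B, x.1 < Ordinal.omega0 ^ ((n + 1 : ℕ) : Ordinal) := by
      intro x hx
      rcases eq_or_ne x.1 0 with h0 | h0
      · rw [h0]; exact Ordinal.opow_pos _ Ordinal.omega0_pos
      · rw [Ordinal.lt_opow_iff_log_lt Ordinal.one_lt_omega0 h0, ← hfcast x]
        exact_mod_cast Nat.lt_succ_of_le (hn ⟨x, hx, rfl⟩)
    have hpow : Ordinal.omega0 ^ ((n + 1 : ℕ) : Ordinal) < Ordinal.omega0 ^ Ordinal.omega0 := by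
      rw [Ordinal.opow_lt_opow_iff_right Ordinal.one_lt_omega0]
      exact Ordinal.nat_lt_omega0 _
    -- embed Iio (ω^ω) into Bᶜ by x ↦ ω^(n+1) + x
    have hmem : ∀ x : Set.Iio (Ordinal.omega0 ^ Ordinal.omega0),
        Ordinal.omega0 ^ ((n + 1 : ℕ) : Ordinal) + x.1 < Ordinal.omega0 ^ Ordinal.omega0 :=
      fun x => Ordinal.principal_add_omega0_opow _ hpow x.2
    set g : Set.Iio (Ordinal.omega0 ^ Ordinal.omega0) → ↥(Bᶜ) := fun x =>
      ⟨⟨Ordinal.omega0 ^ ((n + 1 : ℕ) : Ordinal) + x.1, hmem x⟩, by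
        intro hmemB
        exact absurd (hBbd _ hmemB) (not_lt.2 (le_self_add))⟩ with hg
    have hgmono : StrictMono g := by
      intro x y hxy
      simp only [hg, Subtype.mk_lt_mk]
      change Ordinal.omega0 ^ ((n + 1 : ℕ) : Ordinal) + x.1
        < Ordinal.omega0 ^ ((n + 1 : ℕ) : Ordinal) + y.1
      exact (add_lt_add_iff_left _).2 (Subtype.coe_lt_coe.2 hxy)
    have hle : Ordinal.type
        ((· < ·) : Set.Iio (Ordinal.omega0 ^ Ordinal.omega0)
          → Set.Iio (Ordinal.omega0 ^ Ordinal.omega0) → Prop) ≤ otype Bᶜ :=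
      ((OrderEmbedding.ofStrictMono g hgmono).ltEmbedding).ordinal_type_le
    rw [type_Iio_ordinal, lift_omega0_opow_omega0] at hle
    exact absurd hB (not_lt.2 hle)
  obtain ⟨A, hpos, hfib⟩ := H f hunb
  -- initial segments of A are finite
  have hseg : ∀ a : ↥A, {b : ↥A | b.1 < a.1}.Finite := by
    intro a
    have hT : (⋃ k ∈ Finset.range (f a.1 + 1), {o ∈ A | f o = k}).Finite :=
      (Finset.range (f a.1 + 1)).finite_toSet.biUnion fun k _ => hfib k
    refine (hT.preimage Subtype.val_injective.injOn).subset ?_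
    intro b hb
    simp only [Set.mem_preimage, Set.mem_iUnion]
    exact ⟨f b.1, Finset.mem_range.2 (Nat.lt_succ_of_le (hfmono _ _ (le_of_lt hb))),
      b.2, rfl⟩
  -- the counting function witnesses otype A ≤ ω
  set g : ↥A → Set.Iio (Ordinal.omega0) :=
    fun a => ⟨(({b : ↥A | b.1 < a.1}.ncard : ℕ) : Ordinal), Ordinal.nat_lt_omega0 _⟩ with hgdef
  have hgmono : StrictMono g := by
    intro a a' haa'
    have hmem : a ∈ {b : ↥A | b.1 < a'.1} := Subtype.coe_lt_coe.2 haa'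
    have hss : {b : ↥A | b.1 < a.1} ⊂ {b : ↥A | b.1 < a'.1} := by
      rw [Set.ssubset_def]
      refine ⟨fun b hb => lt_trans hb (Subtype.coe_lt_coe.2 haa'), fun hcon => ?_⟩
      have hlt : a.1 < a.1 := hcon hmem
      exact lt_irrefl _ hlt
    have := Set.ncard_lt_ncard hss (hseg a')
    simp only [hgdef, Subtype.mk_lt_mk]
    exact Subtype.mk_lt_mk.2 (Nat.cast_lt.2 this)
  have hA : otype A ≤ Ordinal.omega0 := by
    have h := ((OrderEmbedding.ofStrictMono g hgmono).ltEmbedding).ordinal_type_le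
    rw [type_Iio_ordinal, Ordinal.lift_omega0] at h
    exact h
  have hAlt : otype A < Ordinal.omega0 ^ Ordinal.omega0 := by
    refine lt_of_le_of_lt hA ?_
    conv_lhs => rw [← Ordinal.opow_one Ordinal.omega0]
    rw [Ordinal.opow_lt_opow_iff_right Ordinal.one_lt_omega0]
    exact Ordinal.one_lt_omega0
  obtain ⟨x, hxA, hxAc⟩ := hpos Aᶜ (by rwa [compl_compl])
  exact hxAc hxA
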